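/- Fix integers p ≥ 2 and m ≥ 1. For 0 ≤ d ≤ m define C_d = E_{σ_1,...,σ_m ∼ Unif(S_p)}[Ψ_σ(x)·Ψ_σ(x')] where (x, x') is any pair of index vectors in [p]^m differing in exactly d coordinates and Ψ_σ(x) = 1(Σ_{i=1}^m σ_i(x_i) ≡ 0 mod p). Then C_0 = 1/p and for all d ≥ 1, C_d = (1/p²)(1 − 1/(1−p)^{d−1}). -/

import Mathlib

set_option linter.unusedSectionVars false
set_option maxHeartbeats 1000000

open Finset

section PermCount

variable {V : Type*} [Fintype V] [DecidableEq V]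

private lemma fix_const (a s s' : V) :
    ∑ π : Equiv.Perm V, (if π a = s then (1:ℝ) else 0)
      = ∑ π : Equiv.Perm V, (if π a = s' then (1:ℝ) else 0) := by
  refine Fintype.sum_equiv (Equiv.mulLeft (Equiv.swap s s')) _ _ (fun π => ?_)
  simp only [Equiv.coe_mulLeft, Equiv.Perm.mul_apply]
  congr 1
  rw [eq_iff_iff]
  constructor
  · intro h; rw [h]; exact Equiv.swap_apply_left s s'
  · intro h
    exact (Equiv.swap s s').injective (h.trans (Equiv.swap_apply_left s s').symm)

private lemma fix_count (a s : V) :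
    (Fintype.card V : ℝ) * ∑ π : Equiv.Perm V, (if π a = s then (1:ℝ) else 0)
      = Fintype.card (Equiv.Perm V) := by
  have h1 : (Fintype.card (Equiv.Perm V) : ℝ)
      = ∑ s' : V, ∑ π : Equiv.Perm V, (if π a = s' then (1:ℝ) else 0) := by
    rw [Finset.sum_comm]
    simp
  rw [h1, Finset.sum_congr rfl (fun s' _ => fix_const a s' s), Finset.sum_const,
    nsmul_eq_mul, Finset.card_univ]

private lemma exists_move (s t s' t' : V) (h1 : s ≠ t) (h2 : s' ≠ t') :
    ∃ τ : Equiv.Perm V, τ s = s' ∧ τ t = t' := by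
  set w := Equiv.swap s s' with hw
  refine ⟨w.trans (Equiv.swap (w t) t'), ?_, ?_⟩
  · have hws : w s = s' := Equiv.swap_apply_left s s'
    have hne1 : s' ≠ w t := fun h => h1 (w.injective (hws.trans h))
    simp only [Equiv.trans_apply, hws]
    exact Equiv.swap_apply_of_ne_of_ne hne1 h2
  · simp only [Equiv.trans_apply]
    exact Equiv.swap_apply_left _ _

private lemma pair_const (a b : V) (s t s' t' : V) (h1 : s ≠ t) (h2 : s' ≠ t') :
    ∑ π : Equiv.Perm V, ((if π a = s then (1:ℝ) else 0) * (if π b = t then (1:ℝ) else 0))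
      = ∑ π : Equiv.Perm V, ((if π a = s' then (1:ℝ) else 0) * (if π b = t' then (1:ℝ) else 0)) := by
  obtain ⟨τ, hs, ht⟩ := exists_move s t s' t' h1 h2
  refine Fintype.sum_equiv (Equiv.mulLeft τ) _ _ (fun π => ?_)
  simp only [Equiv.coe_mulLeft, Equiv.Perm.mul_apply]
  congr 1
  · congr 1; rw [eq_iff_iff]
    exact ⟨fun h => by rw [h, hs], fun h => τ.injective (h.trans hs.symm)⟩
  · congr 1; rw [eq_iff_iff]
    exact ⟨fun h => by rw [h, ht], fun h => τ.injective (h.trans ht.symm)⟩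

private lemma pair_zero (a b : V) (hab : a ≠ b) (s : V) :
    ∑ π : Equiv.Perm V, ((if π a = s then (1:ℝ) else 0) * (if π b = s then (1:ℝ) else 0)) = 0 := by
  refine Finset.sum_eq_zero (fun π _ => ?_)
  by_cases h : π a = s
  · have : π b ≠ s := fun h' => hab (π.injective (h.trans h'.symm))
    simp [h, this]
  · simp [h]

private lemma offdiag_card :
    ∑ s : V, ∑ t : V, (if s ≠ t then (1:ℝ) else 0)
      = (Fintype.card V : ℝ) * ((Fintype.card V : ℝ) - 1) := by
  have key : ∀ s : V, ∑ t : V, (if s ≠ t then (1:ℝ) else 0) = (Fintype.card V : ℝ) - 1 := by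
    intro s
    have h0 : ∀ t : V, (if s ≠ t then (1:ℝ) else 0) = 1 - (if t = s then 1 else 0) := by
      intro t
      by_cases h : t = s
      · rw [if_pos h, if_neg (fun hh => hh h.symm)]; ring
      · rw [if_neg h, if_pos (fun hh => h hh.symm)]; ring
    rw [Finset.sum_congr rfl (fun t _ => h0 t), Finset.sum_sub_distrib]
    simp
  rw [Finset.sum_congr rfl (fun s _ => key s)]
  simp [Finset.sum_const, mul_comm]; ring

private lemma pair_count (a b : V) (hab : a ≠ b) (s t : V) (hst : s ≠ t) :
    (Fintype.card V : ℝ) * ((Fintype.card V : ℝ) - 1) *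
      ∑ π : Equiv.Perm V, ((if π a = s then (1:ℝ) else 0) * (if π b = t then (1:ℝ) else 0))
      = Fintype.card (Equiv.Perm V) := by
  have key : (Fintype.card (Equiv.Perm V) : ℝ)
      = ∑ s' : V, ∑ t' : V, (if s' ≠ t' then (1:ℝ) else 0) *
          ∑ π : Equiv.Perm V, ((if π a = s' then (1:ℝ) else 0) * (if π b = t' then (1:ℝ) else 0)) := by
    have swap : ∀ π : Equiv.Perm V,
        ∑ s' : V, ∑ t' : V, (if s' ≠ t' then (1:ℝ) else 0) *
          ((if π a = s' then (1:ℝ) else 0) * (if π b = t' then (1:ℝ) else 0)) = 1 := by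
      intro π
      have hπ : π a ≠ π b := fun h => hab (π.injective h)
      have step1 : ∀ s' : V, (∑ t' : V, (if s' ≠ t' then (1:ℝ) else 0) *
          ((if π a = s' then (1:ℝ) else 0) * (if π b = t' then (1:ℝ) else 0)))
          = (if π a = s' then (∑ t' : V, (if π b = t' then (if s' ≠ t' then (1:ℝ) else 0) else 0)) else 0) := by
        intro s'
        by_cases h1 : π a = s'
        · simp only [if_pos h1]
          refine Finset.sum_congr rfl fun t' _ => ?_
          by_cases h2 : π b = t'
          · simp only [if_pos h2]; ring
          · simp only [if_neg h2]; ring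
        · simp only [if_neg h1]
          exact Finset.sum_eq_zero fun t' _ => by ring
      rw [Finset.sum_congr rfl (fun s' _ => step1 s'), Fintype.sum_ite_eq (π a),
        Fintype.sum_ite_eq (π b)]
      rw [if_pos hπ]
    calc (Fintype.card (Equiv.Perm V) : ℝ)
        = ∑ π : Equiv.Perm V, (1:ℝ) := by simp
      _ = ∑ π : Equiv.Perm V, ∑ s' : V, ∑ t' : V, (if s' ≠ t' then (1:ℝ) else 0) *
            ((if π a = s' then (1:ℝ) else 0) * (if π b = t' then (1:ℝ) else 0)) := by
          exact Finset.sum_congr rfl fun π _ => (swap π).symm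
      _ = _ := by
          rw [Finset.sum_comm]
          refine Finset.sum_congr rfl fun s' _ => ?_
          rw [Finset.sum_comm]
          exact Finset.sum_congr rfl fun t' _ => (Finset.mul_sum _ _ _).symm
  have const : ∀ s' t' : V, s' ≠ t' →
      (∑ π : Equiv.Perm V, ((if π a = s' then (1:ℝ) else 0) * (if π b = t' then (1:ℝ) else 0)))
      = ∑ π : Equiv.Perm V, ((if π a = s then (1:ℝ) else 0) * (if π b = t then (1:ℝ) else 0)) :=
    fun s' t' h => pair_const a b s' t' s t h hst
  have key2 : (Fintype.card (Equiv.Perm V) : ℝ)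
      = (∑ s' : V, ∑ t' : V, (if s' ≠ t' then (1:ℝ) else 0)) *
        ∑ π : Equiv.Perm V, ((if π a = s then (1:ℝ) else 0) * (if π b = t then (1:ℝ) else 0)) := by
    rw [key, Finset.sum_mul]
    refine Finset.sum_congr rfl fun s' _ => ?_
    rw [Finset.sum_mul]
    refine Finset.sum_congr rfl fun t' _ => ?_
    by_cases h : s' ≠ t'
    · rw [const s' t' h]
    · rw [if_neg h]; ring
  rw [key2, offdiag_card]

end PermCount

section ZCount

variable (p m : ℕ) [NeZero p]

private lemma Zsupp (U : Finset (Fin m)) :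
    ∑ u : Fin m → ZMod p, ∏ i, (if i ∈ U then (1:ℝ) else if u i = 0 then 1 else 0)
      = (p:ℝ) ^ U.card := by
  rw [← Fintype.piFinset_univ,
    ← Finset.prod_univ_sum (fun _ => (univ : Finset (ZMod p)))
      (fun i c => if i ∈ U then (1:ℝ) else if c = 0 then 1 else 0)]
  have h : ∀ i, (∑ c : ZMod p, (if i ∈ U then (1:ℝ) else if c = 0 then 1 else 0))
      = if i ∈ U then (p:ℝ) else 1 := by
    intro i
    by_cases h : i ∈ U
    · simp [h, ZMod.card]
    · simp [h]
  rw [Finset.prod_congr rfl (fun i _ => h i), Finset.prod_ite_mem, Finset.univ_inter,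
    Finset.prod_const]

private lemma Ztrans (c δ : ZMod p) (U : Finset (Fin m)) (i0 : Fin m) (hi0 : i0 ∈ U) :
    ∑ u : Fin m → ZMod p, (if ∑ i, u i = c then (1:ℝ) else 0) *
        ∏ i, (if i ∈ U then (1:ℝ) else if u i = 0 then 1 else 0)
      = ∑ u : Fin m → ZMod p, (if ∑ i, u i = c + δ then (1:ℝ) else 0) *
        ∏ i, (if i ∈ U then (1:ℝ) else if u i = 0 then 1 else 0) := by
  have hbij : Function.Bijective (fun u : Fin m → ZMod p => Function.update u i0 (u i0 + δ)) := by
    apply Function.bijective_iff_has_inverse.2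
    refine ⟨fun u => Function.update u i0 (u i0 - δ), fun u => ?_, fun u => ?_⟩ <;>
    · funext i
      by_cases h : i = i0
      · subst h; simp
      · simp [Function.update_of_ne h]
  refine Fintype.sum_bijective _ hbij _ _ (fun u => ?_)
  have hsum : ∑ i, Function.update u i0 (u i0 + δ) i = (∑ i, u i) + δ := by
    rw [Finset.sum_update_of_mem (Finset.mem_univ i0), ← Finset.add_sum_erase univ u
      (Finset.mem_univ i0), Finset.erase_eq]
    ring
  have hprod : ∏ i, (if i ∈ U then (1:ℝ) else if u i = 0 then 1 else 0)
      = ∏ i, (if i ∈ U then (1:ℝ) else if Function.update u i0 (u i0 + δ) i = 0 then 1 else 0) := by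
    refine Finset.prod_congr rfl (fun i _ => ?_)
    by_cases h : i ∈ U
    · simp [h]
    · have : i ≠ i0 := fun hh => h (hh ▸ hi0)
      simp [h, Function.update_of_ne this]
  rw [hsum, ← hprod]
  congr 1
  simp [add_left_inj]

private lemma Zzero (U : Finset (Fin m)) (hU : U.Nonempty) :
    (p:ℝ) * ∑ u : Fin m → ZMod p, (if ∑ i, u i = 0 then (1:ℝ) else 0) *
        ∏ i, (if i ∈ U then (1:ℝ) else if u i = 0 then 1 else 0)
      = (p:ℝ) ^ U.card := by
  obtain ⟨i0, hi0⟩ := hU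
  rw [← Zsupp p m U]
  have expand : ∀ u : Fin m → ZMod p,
      (∏ i, (if i ∈ U then (1:ℝ) else if u i = 0 then 1 else 0))
      = ∑ c : ZMod p, (if ∑ i, u i = c then (1:ℝ) else 0) *
          ∏ i, (if i ∈ U then (1:ℝ) else if u i = 0 then 1 else 0) := by
    intro u
    rw [← Finset.sum_mul]
    have : (∑ c : ZMod p, if ∑ i, u i = c then (1:ℝ) else 0) = 1 := by
      rw [Fintype.sum_ite_eq (∑ i, u i) (fun _ => (1:ℝ))]
    rw [this, one_mul]
  rw [Finset.sum_congr rfl (fun u _ => expand u), Finset.sum_comm]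
  have heach : ∀ c : ZMod p,
      (∑ u : Fin m → ZMod p, (if ∑ i, u i = c then (1:ℝ) else 0) *
        ∏ i, (if i ∈ U then (1:ℝ) else if u i = 0 then 1 else 0))
      = ∑ u : Fin m → ZMod p, (if ∑ i, u i = 0 then (1:ℝ) else 0) *
        ∏ i, (if i ∈ U then (1:ℝ) else if u i = 0 then 1 else 0) := by
    intro c
    have := Ztrans p m 0 c U i0 hi0
    rw [zero_add] at this
    exact this.symm
  rw [Finset.sum_congr rfl (fun c _ => heach c), Finset.sum_const, Finset.card_univ,
    ZMod.card, nsmul_eq_mul]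

private lemma Kcount (D : Finset (Fin m)) :
    (p:ℝ) * ∑ u : Fin m → ZMod p, (if ∑ i, u i = 0 then (1:ℝ) else 0) *
        ∏ i, (if i ∈ D then (if u i = 0 then (0:ℝ) else 1) else (if u i = 0 then 1 else 0))
      = ((p:ℝ) - 1) ^ D.card + ((p:ℝ) - 1) * (-1:ℝ) ^ D.card := by
  have expand : ∀ u : Fin m → ZMod p,
      (∏ i, (if i ∈ D then (if u i = 0 then (0:ℝ) else 1) else (if u i = 0 then 1 else 0)))
      = ∑ T ∈ D.powerset, (-1:ℝ)^T.card *
          ∏ i, (if i ∈ D \ T then (1:ℝ) else if u i = 0 then 1 else 0) := by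
    intro u
    rw [← Finset.prod_mul_prod_compl D]
    have hD : (∏ i ∈ D, (if i ∈ D then (if u i = 0 then (0:ℝ) else 1) else (if u i = 0 then 1 else 0)))
        = ∏ i ∈ D, ((-(if u i = 0 then (1:ℝ) else 0)) + 1) := by
      refine Finset.prod_congr rfl fun i hi => ?_
      rw [if_pos hi]
      by_cases h : u i = 0 <;> simp [h]
    have hDc : (∏ i ∈ Dᶜ, (if i ∈ D then (if u i = 0 then (0:ℝ) else 1) else (if u i = 0 then 1 else 0)))
        = ∏ i ∈ Dᶜ, (if u i = 0 then (1:ℝ) else 0) := by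
      refine Finset.prod_congr rfl fun i hi => ?_
      rw [if_neg (Finset.mem_compl.1 hi)]
    rw [hD, hDc, Finset.prod_add, Finset.sum_mul]
    refine Finset.sum_congr rfl fun T hT => ?_
    have hTD : T ⊆ D := Finset.mem_powerset.1 hT
    have hneg : (∏ i ∈ T, (-(if u i = 0 then (1:ℝ) else 0)))
        = (-1:ℝ)^T.card * ∏ i ∈ T, (if u i = 0 then (1:ℝ) else 0) := by
      rw [← Finset.prod_const (-1:ℝ), ← Finset.prod_mul_distrib]
      exact Finset.prod_congr rfl fun i _ => by ring
    have hone : (∏ i ∈ D \ T, (1:ℝ)) = 1 := Finset.prod_const_one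
    have hcompl : (D \ T)ᶜ = T ∪ Dᶜ := by ext i; simp; tauto
    have hsplit : (∏ i, (if i ∈ D \ T then (1:ℝ) else if u i = 0 then 1 else 0))
        = (∏ i ∈ T, (if u i = 0 then (1:ℝ) else 0)) * ∏ i ∈ Dᶜ, (if u i = 0 then (1:ℝ) else 0) := by
      rw [← Finset.prod_mul_prod_compl (D \ T), hcompl]
      have h1 : (∏ i ∈ D \ T, (if i ∈ D \ T then (1:ℝ) else if u i = 0 then 1 else 0)) = 1 := by
        rw [Finset.prod_congr rfl (fun i hi => if_pos hi)]; exact Finset.prod_const_one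
      have hdisj : Disjoint T Dᶜ := by
        refine Finset.disjoint_left.2 fun i hiT hiDc => (Finset.mem_compl.1 hiDc) (hTD hiT)
      rw [h1, one_mul, Finset.prod_union hdisj]
      congr 1 <;> refine Finset.prod_congr rfl fun i hi => ?_
      · exact if_neg (fun hh => (Finset.mem_sdiff.1 hh).2 hi)
      · exact if_neg (fun hh => (Finset.mem_compl.1 hi) ((Finset.mem_sdiff.1 hh).1))
    rw [hneg, hone, mul_one, hsplit, mul_assoc]
  have step2 : (∑ u : Fin m → ZMod p, (if ∑ i, u i = 0 then (1:ℝ) else 0) *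
        ∏ i, (if i ∈ D then (if u i = 0 then (0:ℝ) else 1) else (if u i = 0 then 1 else 0)))
      = ∑ T ∈ D.powerset, (-1:ℝ)^T.card *
          ∑ u : Fin m → ZMod p, (if ∑ i, u i = 0 then (1:ℝ) else 0) *
            ∏ i, (if i ∈ D \ T then (1:ℝ) else if u i = 0 then 1 else 0) := by
    rw [Finset.sum_congr rfl fun u _ => by rw [expand u, Finset.mul_sum]]
    rw [Finset.sum_comm]
    refine Finset.sum_congr rfl fun T _ => ?_
    rw [Finset.mul_sum]
    exact Finset.sum_congr rfl fun u _ => by ring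
  have hz : ∀ T ∈ D.powerset,
      (p:ℝ) * (∑ u : Fin m → ZMod p, (if ∑ i, u i = 0 then (1:ℝ) else 0) *
        ∏ i, (if i ∈ D \ T then (1:ℝ) else if u i = 0 then 1 else 0))
      = (p:ℝ)^((D \ T).card) + (if T = D then (p:ℝ) - 1 else 0) := by
    intro T hT
    by_cases hTD : T = D
    · subst hTD
      rw [Finset.sdiff_self]
      have h1 : (∑ u : Fin m → ZMod p, (if ∑ i, u i = 0 then (1:ℝ) else 0) *
          ∏ i, (if i ∈ (∅ : Finset (Fin m)) then (1:ℝ) else if u i = 0 then 1 else 0)) = 1 := by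
        have hterm : ∀ u : Fin m → ZMod p, (if ∑ i, u i = 0 then (1:ℝ) else 0) *
            (∏ i, (if i ∈ (∅ : Finset (Fin m)) then (1:ℝ) else if u i = 0 then 1 else 0))
            = if u = 0 then (if ∑ i, u i = 0 then (1:ℝ) else 0) else 0 := by
          intro u
          by_cases h : u = 0
          · subst h; simp
          · obtain ⟨i, hi⟩ := Function.ne_iff.1 h
            rw [if_neg h, Finset.prod_eq_zero (Finset.mem_univ i), mul_zero]
            rw [if_neg (Finset.notMem_empty i), if_neg (by simpa using hi)]
        rw [Finset.sum_congr rfl fun u _ => hterm u, Fintype.sum_ite_eq' (0 : Fin m → ZMod p)]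
        simp
      rw [h1, if_pos rfl, Finset.card_empty, pow_zero, mul_one]
      ring
    · have hne : (D \ T).Nonempty := by
        rw [Finset.sdiff_nonempty]
        intro hsub
        exact hTD (Finset.Subset.antisymm (Finset.mem_powerset.1 hT) hsub)
      rw [Zzero p m _ hne, if_neg hTD, add_zero]
  have main : (p:ℝ) * ∑ u : Fin m → ZMod p, (if ∑ i, u i = 0 then (1:ℝ) else 0) *
        ∏ i, (if i ∈ D then (if u i = 0 then (0:ℝ) else 1) else (if u i = 0 then 1 else 0))
      = ∑ T ∈ D.powerset, (-1:ℝ)^T.card *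
          ((p:ℝ)^((D \ T).card) + (if T = D then (p:ℝ) - 1 else 0)) := by
    rw [step2, Finset.mul_sum]
    refine Finset.sum_congr rfl fun T hT => ?_
    rw [← hz T hT]; ring
  rw [main]
  have split : ∑ T ∈ D.powerset, (-1:ℝ)^T.card *
          ((p:ℝ)^((D \ T).card) + (if T = D then (p:ℝ) - 1 else 0))
      = (∑ T ∈ D.powerset, (-1:ℝ)^T.card * (p:ℝ)^((D \ T).card))
        + ∑ T ∈ D.powerset, (if T = D then (-1:ℝ)^T.card * ((p:ℝ) - 1) else 0) := by
    rw [← Finset.sum_add_distrib]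
    refine Finset.sum_congr rfl fun T _ => ?_
    by_cases h : T = D <;> simp [h] <;> ring
  rw [split]
  have hfirst : (∑ T ∈ D.powerset, (-1:ℝ)^T.card * (p:ℝ)^((D \ T).card))
      = ((p:ℝ) - 1) ^ D.card := by
    have := Finset.prod_add (fun _ : Fin m => (-1:ℝ)) (fun _ : Fin m => (p:ℝ)) D
    rw [Finset.prod_const] at this
    have heq : ((-1:ℝ) + (p:ℝ)) ^ D.card = ((p:ℝ) - 1) ^ D.card := by ring_nf
    rw [heq] at this
    rw [this]
    exact Finset.sum_congr rfl fun T _ => by rw [Finset.prod_const, Finset.prod_const]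
  have hsecond : (∑ T ∈ D.powerset, (if T = D then (-1:ℝ)^T.card * ((p:ℝ) - 1) else 0))
      = (-1:ℝ)^D.card * ((p:ℝ) - 1) := by
    rw [Finset.sum_ite_eq' D.powerset D (fun T => (-1:ℝ)^T.card * ((p:ℝ) - 1))]
    rw [if_pos (Finset.mem_powerset.2 Finset.Subset.rfl)]
  rw [hfirst, hsecond]
  ring

end ZCount

noncomputable def Hsum (p : ℕ) [NeZero p] (a b s t : ZMod p) : ℝ :=
  ∑ π : Equiv.Perm (ZMod p), (if π a = s then (1:ℝ) else 0) * (if π b = t then (1:ℝ) else 0)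

lemma Hsum_eq (p : ℕ) [NeZero p] (hp : 2 ≤ p) (a s t : ZMod p) :
    Hsum p a a s t = if s = t then (Fintype.card (Equiv.Perm (ZMod p)) : ℝ) / p else 0 := by
  have hp0 : (p:ℝ) ≠ 0 := Nat.cast_ne_zero.2 (by omega)
  by_cases hst : s = t
  · subst hst
    rw [if_pos rfl]
    have h1 : Hsum p a a s s = ∑ π : Equiv.Perm (ZMod p), (if π a = s then (1:ℝ) else 0) := by
      unfold Hsum
      refine Finset.sum_congr rfl fun π _ => ?_
      by_cases h : π a = s <;> simp [h]
    rw [h1, eq_div_iff hp0, mul_comm]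
    have := fix_count a s
    rwa [ZMod.card] at this
  · rw [if_neg hst]
    unfold Hsum
    refine Finset.sum_eq_zero fun π _ => ?_
    by_cases h : π a = s
    · rw [if_neg (fun h2 => hst (h.symm.trans h2)), mul_zero]
    · rw [if_neg h, zero_mul]

lemma Hsum_ne (p : ℕ) [NeZero p] (hp : 2 ≤ p) (a b : ZMod p) (hab : a ≠ b) (s t : ZMod p) :
    Hsum p a b s t = if s = t then 0
      else (Fintype.card (Equiv.Perm (ZMod p)) : ℝ) / ((p:ℝ) * ((p:ℝ) - 1)) := by
  have hp0 : (p:ℝ) ≠ 0 := Nat.cast_ne_zero.2 (by omega)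
  have hp1 : (p:ℝ) - 1 ≠ 0 := by
    have : (2:ℝ) ≤ (p:ℝ) := by exact_mod_cast hp
    nlinarith
  by_cases hst : s = t
  · subst hst; rw [if_pos rfl]; exact pair_zero a b hab s
  · rw [if_neg hst, eq_div_iff (mul_ne_zero hp0 hp1), mul_comm]
    have := pair_count a b hab s t hst
    rwa [ZMod.card] at this

/-- Closed form for the correlation `C_d` of the modular-addition indicator under
independent uniform random permutations, for a pair of index vectors differing in
exactly `d` coordinates. -/
theorem stmt7 (p m : ℕ) [NeZero p] (hp : 2 ≤ p) (hm : 1 ≤ m)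
    (d : ℕ) (hd : d ≤ m) (x x' : Fin m → ZMod p)
    (hdiff : (Finset.univ.filter (fun i => x i ≠ x' i)).card = d) :
    (∑ σ : Fin m → Equiv.Perm (ZMod p),
        (if (∑ i, σ i (x i)) = 0 then (1 : ℝ) else 0) *
        (if (∑ i, σ i (x' i)) = 0 then (1 : ℝ) else 0)) /
      (Fintype.card (Fin m → Equiv.Perm (ZMod p)) : ℝ) =
    if d = 0 then 1 / (p : ℝ)
    else (1 / (p : ℝ) ^ 2) * (1 - 1 / (1 - (p : ℝ)) ^ (d - 1)) := by
  classical
  have hp0 : (p:ℝ) ≠ 0 := Nat.cast_ne_zero.2 (by omega)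
  have hp1 : (p:ℝ) - 1 ≠ 0 := by
    have : (2:ℝ) ≤ (p:ℝ) := by exact_mod_cast hp
    nlinarith
  set n : ℝ := (Fintype.card (Equiv.Perm (ZMod p)) : ℝ) with hn_def
  have hn0 : n ≠ 0 := by
    rw [hn_def]
    exact_mod_cast Fintype.card_ne_zero
  set D : Finset (Fin m) := Finset.univ.filter (fun i => x i ≠ x' i) with hD_def
  -- Step A : factorize the permutation sum over coordinates
  have ind_congr : ∀ {P Q : Prop} [Decidable P] [Decidable Q], (P ↔ Q) →
      (if P then (1:ℝ) else 0) = (if Q then (1:ℝ) else 0) :=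
    fun h => if_congr h rfl rfl
  have stepA : (∑ σ : Fin m → Equiv.Perm (ZMod p),
        (if (∑ i, σ i (x i)) = 0 then (1 : ℝ) else 0) *
        (if (∑ i, σ i (x' i)) = 0 then (1 : ℝ) else 0))
      = ∑ s : Fin m → ZMod p, ∑ t : Fin m → ZMod p,
          ((if (∑ i, s i) = 0 then (1:ℝ) else 0) * (if (∑ i, t i) = 0 then (1:ℝ) else 0)) *
            ∏ i, Hsum p (x i) (x' i) (s i) (t i) := by
    have hH : ∀ s t : Fin m → ZMod p,
        (∏ i, Hsum p (x i) (x' i) (s i) (t i))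
        = ∑ σ : Fin m → Equiv.Perm (ZMod p),
            ∏ i, ((if σ i (x i) = s i then (1:ℝ) else 0) *
              (if σ i (x' i) = t i then (1:ℝ) else 0)) := by
      intro s t
      rw [show (∏ i, Hsum p (x i) (x' i) (s i) (t i))
          = ∏ i, ∑ π ∈ (univ : Finset (Equiv.Perm (ZMod p))),
              ((if π (x i) = s i then (1:ℝ) else 0) * (if π (x' i) = t i then (1:ℝ) else 0))
        from rfl]
      rw [Finset.prod_univ_sum, Fintype.piFinset_univ]
    symm
    calc ∑ s : Fin m → ZMod p, ∑ t : Fin m → ZMod p,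
          ((if (∑ i, s i) = 0 then (1:ℝ) else 0) * (if (∑ i, t i) = 0 then (1:ℝ) else 0)) *
            ∏ i, Hsum p (x i) (x' i) (s i) (t i)
        = ∑ s : Fin m → ZMod p, ∑ t : Fin m → ZMod p, ∑ σ : Fin m → Equiv.Perm (ZMod p),
            ((if (∑ i, s i) = 0 then (1:ℝ) else 0) * (if (∑ i, t i) = 0 then (1:ℝ) else 0)) *
              ∏ i, ((if σ i (x i) = s i then (1:ℝ) else 0) *
                (if σ i (x' i) = t i then (1:ℝ) else 0)) := by
          refine Finset.sum_congr rfl fun s _ => Finset.sum_congr rfl fun t _ => ?_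
          rw [hH s t, Finset.mul_sum]
      _ = ∑ σ : Fin m → Equiv.Perm (ZMod p), ∑ s : Fin m → ZMod p, ∑ t : Fin m → ZMod p,
            ((if (∑ i, s i) = 0 then (1:ℝ) else 0) * (if (∑ i, t i) = 0 then (1:ℝ) else 0)) *
              ∏ i, ((if σ i (x i) = s i then (1:ℝ) else 0) *
                (if σ i (x' i) = t i then (1:ℝ) else 0)) := by
          rw [Finset.sum_congr rfl fun s (_ : s ∈ univ) => Finset.sum_comm, Finset.sum_comm]
      _ = ∑ σ : Fin m → Equiv.Perm (ZMod p),
            (if (∑ i, σ i (x i)) = 0 then (1 : ℝ) else 0) *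
            (if (∑ i, σ i (x' i)) = 0 then (1 : ℝ) else 0) := by
          refine Finset.sum_congr rfl fun σ _ => ?_
          have hsplit : ∀ s t : Fin m → ZMod p,
              (∏ i, ((if σ i (x i) = s i then (1:ℝ) else 0) *
                (if σ i (x' i) = t i then (1:ℝ) else 0)))
              = (if (fun i => σ i (x i)) = s then (1:ℝ) else 0) *
                (if (fun i => σ i (x' i)) = t then (1:ℝ) else 0) := by
            intro s t
            rw [Finset.prod_mul_distrib]
            congr 1
            · rw [Finset.prod_boole]
              simp only [show (∀ i ∈ Finset.univ, σ i (x i) = s i) ↔ ((fun i => σ i (x i)) = s)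
                from ⟨fun h => funext fun i => h i (Finset.mem_univ i),
                  fun h i _ => congrFun h i⟩]
            · rw [Finset.prod_boole]
              simp only [show (∀ i ∈ Finset.univ, σ i (x' i) = t i) ↔ ((fun i => σ i (x' i)) = t)
                from ⟨fun h => funext fun i => h i (Finset.mem_univ i),
                  fun h i _ => congrFun h i⟩]
          have hterm : ∀ s t : Fin m → ZMod p,
              ((if (∑ i, s i) = 0 then (1:ℝ) else 0) * (if (∑ i, t i) = 0 then (1:ℝ) else 0)) *
                ∏ i, ((if σ i (x i) = s i then (1:ℝ) else 0) *
                  (if σ i (x' i) = t i then (1:ℝ) else 0))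
              = (if (fun i => σ i (x i)) = s then (1:ℝ) else 0) *
                (if (fun i => σ i (x' i)) = t then
                  ((if (∑ i, s i) = 0 then (1:ℝ) else 0) * (if (∑ i, t i) = 0 then (1:ℝ) else 0))
                  else 0) := by
            intro s t
            rw [hsplit s t]
            by_cases h1 : (fun i => σ i (x i)) = s <;>
              by_cases h2 : (fun i => σ i (x' i)) = t <;> simp [h1, h2] <;> ring
          rw [Finset.sum_congr rfl fun s (_ : s ∈ univ) => Finset.sum_congr rfl
            fun t (_ : t ∈ univ) => hterm s t]
          have hinner : ∀ s : Fin m → ZMod p,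
              (∑ t : Fin m → ZMod p, (if (fun i => σ i (x i)) = s then (1:ℝ) else 0) *
                (if (fun i => σ i (x' i)) = t then
                  ((if (∑ i, s i) = 0 then (1:ℝ) else 0) * (if (∑ i, t i) = 0 then (1:ℝ) else 0))
                  else 0))
              = (if (fun i => σ i (x i)) = s then (1:ℝ) else 0) *
                ((if (∑ i, s i) = 0 then (1:ℝ) else 0) *
                  (if (∑ i, σ i (x' i)) = 0 then (1:ℝ) else 0)) := by
            intro s
            rw [← Finset.mul_sum]
            congr 1
            exact Fintype.sum_ite_eq (fun i => σ i (x' i))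
              (fun t => (if (∑ i, s i) = 0 then (1:ℝ) else 0) * (if (∑ i, t i) = 0 then (1:ℝ) else 0))
          rw [Finset.sum_congr rfl fun s (_ : s ∈ univ) => hinner s]
          rw [Finset.sum_congr rfl fun s (_ : s ∈ univ) => boole_mul _ _]
          rw [Fintype.sum_ite_eq (fun i => σ i (x i))
            (fun s => (if (∑ i, s i) = 0 then (1:ℝ) else 0) *
              (if (∑ i, σ i (x' i)) = 0 then (1:ℝ) else 0))]
  -- Step B : evaluate the product of Hsum factors
  have hEcard : (Finset.univ.filter (fun i => ¬ x i ≠ x' i)).card = m - d := by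
    have h1 := Finset.card_filter_add_card_filter_not
      (s := (Finset.univ : Finset (Fin m))) (p := fun i => x i ≠ x' i)
    rw [Finset.card_univ, Fintype.card_fin] at h1
    have h2 : (Finset.univ.filter (fun i => x i ≠ x' i)).card = d := hdiff
    omega
  have stepB : ∀ s t : Fin m → ZMod p,
      (∏ i, Hsum p (x i) (x' i) (s i) (t i))
      = (n/(p:ℝ))^(m-d) * (n/((p:ℝ)*((p:ℝ)-1)))^d *
        ∏ i, (if i ∈ D then (if s i = t i then (0:ℝ) else 1)
          else (if s i = t i then 1 else 0)) := by
    intro s t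
    rw [← Finset.prod_filter_mul_prod_filter_not univ (fun i => x i ≠ x' i)
        (fun i => Hsum p (x i) (x' i) (s i) (t i))]
    rw [← Finset.prod_filter_mul_prod_filter_not univ (fun i => x i ≠ x' i)
        (fun i => (if i ∈ D then (if s i = t i then (0:ℝ) else 1)
          else (if s i = t i then 1 else 0)))]
    have hDpart : (∏ i ∈ Finset.univ.filter (fun i => x i ≠ x' i),
          Hsum p (x i) (x' i) (s i) (t i))
        = (n/((p:ℝ)*((p:ℝ)-1)))^d *
          ∏ i ∈ Finset.univ.filter (fun i => x i ≠ x' i), (if s i = t i then (0:ℝ) else 1) := by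
      have hfac : ∀ i ∈ Finset.univ.filter (fun i => x i ≠ x' i),
          Hsum p (x i) (x' i) (s i) (t i)
          = (n/((p:ℝ)*((p:ℝ)-1))) * (if s i = t i then (0:ℝ) else 1) := by
        intro i hi
        have hxi : x i ≠ x' i := (Finset.mem_filter.1 hi).2
        rw [Hsum_ne p hp (x i) (x' i) hxi]
        by_cases h : s i = t i <;> simp [h, hn_def]
      rw [Finset.prod_congr rfl hfac, Finset.prod_mul_distrib, Finset.prod_const]
      congr 2
    have hEpart : (∏ i ∈ Finset.univ.filter (fun i => ¬ x i ≠ x' i),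
          Hsum p (x i) (x' i) (s i) (t i))
        = (n/(p:ℝ))^(m-d) *
          ∏ i ∈ Finset.univ.filter (fun i => ¬ x i ≠ x' i), (if s i = t i then (1:ℝ) else 0) := by
      have hfac : ∀ i ∈ Finset.univ.filter (fun i => ¬ x i ≠ x' i),
          Hsum p (x i) (x' i) (s i) (t i)
          = (n/(p:ℝ)) * (if s i = t i then (1:ℝ) else 0) := by
        intro i hi
        have hxi : x i = x' i := not_not.1 (Finset.mem_filter.1 hi).2
        rw [← hxi, Hsum_eq p hp (x i)]
        by_cases h : s i = t i <;> simp [h, hn_def]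
      rw [Finset.prod_congr rfl hfac, Finset.prod_mul_distrib, Finset.prod_const]
      congr 2
    have hDpart2 : (∏ i ∈ Finset.univ.filter (fun i => x i ≠ x' i),
          (if i ∈ D then (if s i = t i then (0:ℝ) else 1) else (if s i = t i then 1 else 0)))
        = ∏ i ∈ Finset.univ.filter (fun i => x i ≠ x' i), (if s i = t i then (0:ℝ) else 1) := by
      refine Finset.prod_congr rfl fun i hi => ?_
      rw [if_pos (show i ∈ D from hi)]
    have hEpart2 : (∏ i ∈ Finset.univ.filter (fun i => ¬ x i ≠ x' i),
          (if i ∈ D then (if s i = t i then (0:ℝ) else 1) else (if s i = t i then 1 else 0)))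
        = ∏ i ∈ Finset.univ.filter (fun i => ¬ x i ≠ x' i), (if s i = t i then (1:ℝ) else 0) := by
      refine Finset.prod_congr rfl fun i hi => ?_
      have : i ∉ D := by
        rw [hD_def]
        simp only [Finset.mem_filter, Finset.mem_univ, true_and]
        exact (Finset.mem_filter.1 hi).2
      rw [if_neg this]
    rw [hDpart, hEpart, hDpart2, hEpart2]
    ring
  -- Step C : substitute t = s + u
  have stepC : (∑ s : Fin m → ZMod p, ∑ t : Fin m → ZMod p,
        ((if (∑ i, s i) = 0 then (1:ℝ) else 0) * (if (∑ i, t i) = 0 then (1:ℝ) else 0)) *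
          ∏ i, (if i ∈ D then (if s i = t i then (0:ℝ) else 1) else (if s i = t i then 1 else 0)))
      = (∑ s : Fin m → ZMod p, (if (∑ i, s i) = 0 then (1:ℝ) else 0)) *
        (∑ u : Fin m → ZMod p, (if (∑ i, u i) = 0 then (1:ℝ) else 0) *
          ∏ i, (if i ∈ D then (if u i = 0 then (0:ℝ) else 1) else (if u i = 0 then 1 else 0))) := by
    have hfix : ∀ s : Fin m → ZMod p,
        (∑ t : Fin m → ZMod p,
          ((if (∑ i, s i) = 0 then (1:ℝ) else 0) * (if (∑ i, t i) = 0 then (1:ℝ) else 0)) *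
            ∏ i, (if i ∈ D then (if s i = t i then (0:ℝ) else 1) else (if s i = t i then 1 else 0)))
        = (if (∑ i, s i) = 0 then (1:ℝ) else 0) *
          (∑ u : Fin m → ZMod p, (if (∑ i, u i) = 0 then (1:ℝ) else 0) *
            ∏ i, (if i ∈ D then (if u i = 0 then (0:ℝ) else 1) else (if u i = 0 then 1 else 0))) := by
      intro s
      have hre : (∑ t : Fin m → ZMod p,
          ((if (∑ i, s i) = 0 then (1:ℝ) else 0) * (if (∑ i, t i) = 0 then (1:ℝ) else 0)) *
            ∏ i, (if i ∈ D then (if s i = t i then (0:ℝ) else 1) else (if s i = t i then 1 else 0)))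
          = ∑ u : Fin m → ZMod p,
          ((if (∑ i, s i) = 0 then (1:ℝ) else 0) * (if (∑ i, (s + u) i) = 0 then (1:ℝ) else 0)) *
            ∏ i, (if i ∈ D then (if s i = (s + u) i then (0:ℝ) else 1)
              else (if s i = (s + u) i then 1 else 0)) := by
        refine (Fintype.sum_equiv (Equiv.addLeft s) _ _ (fun u => ?_)).symm
        simp only [Equiv.coe_addLeft]
        rfl
      rw [hre]
      have hterm3 : ∀ u : Fin m → ZMod p,
          (((if (∑ i, s i) = 0 then (1:ℝ) else 0) * (if (∑ i, (s + u) i) = 0 then (1:ℝ) else 0)) *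
            ∏ i, (if i ∈ D then (if s i = (s + u) i then (0:ℝ) else 1)
              else (if s i = (s + u) i then 1 else 0)))
          = ((if (∑ i, s i) = 0 then (1:ℝ) else 0) *
              (if (∑ i, s i) + (∑ i, u i) = 0 then (1:ℝ) else 0)) *
            ∏ i, (if i ∈ D then (if u i = 0 then (0:ℝ) else 1) else (if u i = 0 then 1 else 0)) := by
        intro u
        simp only [Pi.add_apply, left_eq_add, Finset.sum_add_distrib]
      rw [Finset.sum_congr rfl fun u _ => hterm3 u]
      by_cases hs : (∑ i, s i) = 0
      · rw [Finset.mul_sum]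
        refine Finset.sum_congr rfl fun u _ => ?_
        rw [hs, zero_add, if_pos rfl]
        ring
      · rw [Finset.sum_eq_zero fun u _ => by rw [if_neg hs, zero_mul, zero_mul], if_neg hs,
          zero_mul]
    rw [Finset.sum_congr rfl fun s _ => hfix s, ← Finset.sum_mul]
  -- value of the zero-sum count
  haveI : Nonempty (Fin m) := ⟨⟨0, hm⟩⟩
  have hF0 : (p:ℝ) * (∑ s : Fin m → ZMod p, (if (∑ i, s i) = 0 then (1:ℝ) else 0)) = (p:ℝ)^m := by
    have huniv : ∀ u : Fin m → ZMod p,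
        (∏ i, (if i ∈ (Finset.univ : Finset (Fin m)) then (1:ℝ) else if u i = 0 then 1 else 0)) = 1 := by
      intro u; simp
    have hz := Zzero p m Finset.univ Finset.univ_nonempty
    rw [Finset.sum_congr rfl fun u _ => by rw [huniv u, mul_one]] at hz
    rwa [Finset.card_univ, Fintype.card_fin] at hz
  have hKK : (p:ℝ) * (∑ u : Fin m → ZMod p, (if (∑ i, u i) = 0 then (1:ℝ) else 0) *
        ∏ i, (if i ∈ D then (if u i = 0 then (0:ℝ) else 1) else (if u i = 0 then 1 else 0)))
      = ((p:ℝ) - 1)^d + ((p:ℝ) - 1) * (-1:ℝ)^d := by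
    have := Kcount p m D
    rwa [hdiff] at this
  -- assemble
  have hcard : (Fintype.card (Fin m → Equiv.Perm (ZMod p)) : ℝ) = n^m := by
    rw [Fintype.card_fun, Fintype.card_fin, hn_def]
    push_cast
    rfl
  have hbig : (∑ σ : Fin m → Equiv.Perm (ZMod p),
        (if (∑ i, σ i (x i)) = 0 then (1 : ℝ) else 0) *
        (if (∑ i, σ i (x' i)) = 0 then (1 : ℝ) else 0))
      = (n/(p:ℝ))^(m-d) * (n/((p:ℝ)*((p:ℝ)-1)))^d *
        ((∑ s : Fin m → ZMod p, (if (∑ i, s i) = 0 then (1:ℝ) else 0)) *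
        (∑ u : Fin m → ZMod p, (if (∑ i, u i) = 0 then (1:ℝ) else 0) *
          ∏ i, (if i ∈ D then (if u i = 0 then (0:ℝ) else 1)
            else (if u i = 0 then 1 else 0)))) := by
    rw [stepA, ← stepC, Finset.mul_sum]
    refine Finset.sum_congr rfl fun s _ => ?_
    rw [Finset.mul_sum]
    refine Finset.sum_congr rfl fun t _ => ?_
    rw [stepB s t]
    ring
  rw [hbig, hcard]
  -- closed forms for the two counting sums
  have hF0' : (∑ s : Fin m → ZMod p, (if (∑ i, s i) = 0 then (1:ℝ) else 0)) = (p:ℝ)^(m-1) := by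
    have h2 : (p:ℝ) * (p:ℝ)^(m-1) = (p:ℝ)^m := by
      rw [← pow_succ']
      congr 1
      omega
    exact mul_left_cancel₀ hp0 (by rw [hF0, ← h2])
  have hKK' : (∑ u : Fin m → ZMod p, (if (∑ i, u i) = 0 then (1:ℝ) else 0) *
        ∏ i, (if i ∈ D then (if u i = 0 then (0:ℝ) else 1) else (if u i = 0 then 1 else 0)))
      = (((p:ℝ) - 1)^d + ((p:ℝ) - 1) * (-1:ℝ)^d) / (p:ℝ) := by
    rw [eq_div_iff hp0, mul_comm]
    exact hKK
  rw [hF0', hKK']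
  -- final algebra
  set P : ℝ := (p:ℝ) with hP_def
  set R : ℝ := (P - 1)^d + (P - 1) * (-1:ℝ)^d with hR_def
  have hmain : (n/P)^(m-d) * (n/(P*(P-1)))^d * (P^(m-1) * (R/P)) / n^m
      = R / (P*P*(P-1)^d) := by
    have hpow : P^(m-d) * P^d = P^(m-1) * P := by
      rw [← pow_add, ← pow_succ]
      congr 1
      omega
    have hnpow : n^(m-d) * n^d = n^m := by
      rw [← pow_add]
      congr 1
      omega
    rw [div_pow, div_pow, div_mul_div_comm, hnpow, mul_pow]
    field_simp
    linear_combination (-R) * hpow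
  rw [hmain]
  rcases Nat.eq_zero_or_pos d with hd0 | hdpos
  · subst hd0
    rw [if_pos rfl, hR_def]
    field_simp
    ring
  · have hd1 : d ≠ 0 := by omega
    rw [if_neg hd1]
    obtain ⟨e, he⟩ : ∃ e, d = e + 1 := ⟨d - 1, by omega⟩
    subst he
    rw [hR_def]
    have h1 : (1 - P) = -(P - 1) := by ring
    rw [h1, neg_pow (P - 1)]
    simp only [Nat.add_sub_cancel]
    rcases Nat.even_or_odd e with hpar | hpar <;>
    · simp only [pow_succ, hpar.neg_one_pow]
      field_simp
      ring
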